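/- Let M be a finite matroid, n ≥ 4 an integer, and suppose X_1, …, X_n is a bad family for the n-th Kinser inequality in M, i.e. a family of subsets of E(M) violating the inequality. Then cl(X_1), …, cl(X_n) is also a bad family for the n-th Kinser inequality in M; in particular there exists a bad family in which every set is a flat of M. -/

import Mathlib

open Finset

universe u v

namespace Matroid

variable {α : Type*}

/-- The rank of a set in a matroid: the cardinality of a largest independent subset. -/
noncomputable def rnk (M : Matroid α) (X : Set α) : ℕ :=
  sSup {n : ℕ | ∃ I, M.Indep I ∧ I ⊆ X ∧ I.ncard = n}

/-- The `n`-th Kinser inequality for the family `X 1, …, X n`. -/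
def KinserIneq (M : Matroid α) (n : ℕ) (X : ℕ → Set α) : Prop :=
  (∑ i ∈ Finset.Icc 3 n, M.rnk (X i)) + M.rnk (X 1 ∪ X 2) + M.rnk (X 1 ∪ X 3 ∪ X n)
      + ∑ i ∈ Finset.Icc 4 n, M.rnk (X 2 ∪ X (i - 1) ∪ X i)
    ≤ M.rnk (X 1 ∪ X 3) + M.rnk (X 1 ∪ X n)
      + (∑ i ∈ Finset.Icc 3 n, M.rnk (X 2 ∪ X i))
      + ∑ i ∈ Finset.Icc 4 n, M.rnk (X (i - 1) ∪ X i)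

/-- `M` lies in the Kinser class `K n`: the `n`-th Kinser inequality holds for every
family of `n` subsets of the ground set. -/
def MemKinserClass (M : Matroid α) (n : ℕ) : Prop :=
  ∀ X : ℕ → Set α, (∀ i ∈ Finset.Icc 1 n, X i ⊆ M.E) → M.KinserIneq n X

/-- `M` is (isomorphic to) the matroid of linear dependence of a family of vectors of a
vector space over `𝔽`. -/
def IsRepOver {α : Type u} (M : Matroid α) (𝔽 : Type v) [Field 𝔽] : Prop :=
  ∃ (W : Type (max u v)) (_ : AddCommGroup W) (_ : Module 𝔽 W) (φ : α → W),
    ∀ I : Set α, M.Indep I ↔ I ⊆ M.E ∧ LinearIndependent 𝔽 (fun x : I => φ x.1)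

/-- Deletion of a set of elements from a matroid. -/
def del (M : Matroid α) (D : Set α) : Matroid α := M ↾ (M.E \ D)

/-- Contraction of a set of elements in a matroid. -/
def con (M : Matroid α) (C : Set α) : Matroid α := (M✶ ↾ (M✶.E \ C))✶

/-- `N` is a minor of `M`: it is obtained from `M` by contractions and deletions. -/
def IsMinorOf (N M : Matroid α) : Prop :=
  ∃ C D : Set α, C ⊆ M.E ∧ D ⊆ M.E ∧ Disjoint C D ∧ N = (M.con C).del D

/-- `N` is a proper minor of `M`: at least one element is deleted or contracted. -/
def IsProperMinorOf (N M : Matroid α) : Prop :=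
  ∃ C D : Set α, C ⊆ M.E ∧ D ⊆ M.E ∧ Disjoint C D ∧ (C ∪ D).Nonempty ∧
    N = (M.con C).del D

/-- A matroid isomorphism: a bijection of ground sets preserving independence. -/
def IsIsoTo {β : Type*} (M : Matroid α) (N : Matroid β) : Prop :=
  ∃ f : α → β, Set.BijOn f M.E N.E ∧ ∀ I ⊆ M.E, (M.Indep I ↔ N.Indep (f '' I))

/-- The Ingleton inequality (the 4th Kinser inequality) for four subsets. -/
def IngletonIneq (M : Matroid α) (X₁ X₂ X₃ X₄ : Set α) : Prop :=
  M.rnk X₃ + M.rnk X₄ + M.rnk (X₁ ∪ X₂) + M.rnk (X₁ ∪ X₃ ∪ X₄) + M.rnk (X₂ ∪ X₃ ∪ X₄)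
    ≤ M.rnk (X₁ ∪ X₃) + M.rnk (X₁ ∪ X₄) + M.rnk (X₂ ∪ X₃) + M.rnk (X₂ ∪ X₄)
      + M.rnk (X₃ ∪ X₄)

end Matroid


namespace Matroid

variable {α : Type*} {M : Matroid α}

lemma flat_closure' (M : Matroid α) (X : Set α) : M.IsFlat (M.closure X) := by
  rw [closure_eq_subtypeClosure]
  exact isClosed_iff_isFlat.mp (M.subtypeClosure.isClosed_closure _)

lemma rnk_setOf_nonempty (M : Matroid α) (X : Set α) :
    {n : ℕ | ∃ I, M.Indep I ∧ I ⊆ X ∧ I.ncard = n}.Nonempty :=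
  ⟨0, ∅, M.empty_indep, Set.empty_subset _, Set.ncard_empty _⟩

lemma rnk_bddAbove (M : Matroid α) [M.Finite] (X : Set α) :
    BddAbove {n : ℕ | ∃ I, M.Indep I ∧ I ⊆ X ∧ I.ncard = n} := by
  refine ⟨M.E.ncard, ?_⟩
  rintro n ⟨I, hI, -, rfl⟩
  exact Set.ncard_le_ncard hI.subset_ground M.ground_finite

lemma rnk_closure_eq (M : Matroid α) [M.Finite] (X : Set α) :
    M.rnk (M.closure X) = M.rnk X := by
  refine le_antisymm ?_ ?_
  · refine csSup_le (M.rnk_setOf_nonempty _) ?_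
    rintro n ⟨I, hI, hIX, rfl⟩
    obtain ⟨J, hJ⟩ := M.exists_isBasis' X
    have hIJ : I ⊆ M.closure J := by rwa [hJ.closure_eq_closure]
    obtain ⟨I', hI', hII'⟩ := hI.subset_isBasis_of_subset hIJ (M.closure_subset_ground J)
    have hJb : M.IsBasis J (M.closure J) := hJ.indep.isBasis_closure
    have hcard : I'.ncard = J.ncard :=
      (hI'.isBase_restrict).ncard_eq_ncard_of_isBase (hJb.isBase_restrict)
    have hle : I.ncard ≤ J.ncard := by
      rw [← hcard]
      exact Set.ncard_le_ncard hII' (M.set_finite I' hI'.indep.subset_ground)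
    exact hle.trans (le_csSup (M.rnk_bddAbove X) ⟨J, hJ.indep, hJ.subset, rfl⟩)
  · refine csSup_le_csSup (M.rnk_bddAbove _) (M.rnk_setOf_nonempty _) ?_
    rintro n ⟨I, hI, hIX, rfl⟩
    refine ⟨I, hI, ?_, rfl⟩
    exact (Set.subset_inter hIX hI.subset_ground).trans (M.inter_ground_subset_closure X)

lemma rnk_closure_congr [M.Finite] {X Y : Set α} (h : M.closure X = M.closure Y) :
    M.rnk X = M.rnk Y := by
  rw [← M.rnk_closure_eq X, h, M.rnk_closure_eq]

lemma rnk_union_closure [M.Finite] (A B : Set α) :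
    M.rnk (M.closure A ∪ M.closure B) = M.rnk (A ∪ B) :=
  rnk_closure_congr (by simp)

lemma rnk_union3_closure [M.Finite] (A B C : Set α) :
    M.rnk (M.closure A ∪ M.closure B ∪ M.closure C) = M.rnk (A ∪ B ∪ C) :=
  rnk_closure_congr (by
    rw [closure_union_closure_right_eq, ← closure_union_closure_left_eq,
      closure_closure_union_closure_eq_closure_union, closure_union_closure_left_eq])

end Matroid

/-- If `X 1, …, X n` is a bad family for the `n`-th Kinser inequality, then so is the
family of closures `cl (X 1), …, cl (X n)`; in particular there is a bad family in which
every set is a flat. -/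
theorem Matroid.closure_bad_family {α : Type*} (M : Matroid α) [M.Finite] {n : ℕ}
    (hn : 4 ≤ n) (X : ℕ → Set α) (hX : ∀ i ∈ Finset.Icc 1 n, X i ⊆ M.E)
    (hbad : ¬ M.KinserIneq n X) :
    (∀ i, M.IsFlat (M.closure (X i))) ∧ ¬ M.KinserIneq n (fun i => M.closure (X i)) := by
  refine ⟨fun i => M.flat_closure' _, fun h => hbad ?_⟩
  unfold KinserIneq at h ⊢
  simp only [rnk_closure_eq, rnk_union_closure, rnk_union3_closure] at h
  exact h
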